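/- There exist constants C > 0 and M > 0 (depending only on m, the speeds a_1,…,a_m and the vectors l_1,…,l_m) such that for all y ≤ 0 and all t ≥ 1, |∂_t ∂_y e(y,t)| ≤ C t^{−1} Σ_{k=1}^m ( e^{−(y + a_k t)²/(M t)} + e^{−(y − a_k t)²/(M t)} ). -/

import Mathlib

open MeasureTheory Real Set
open scoped ENNReal

/-- errfn(z) := (1/√π) ∫_{−∞}^{z} e^{−u²} du -/
noncomputable def errfn (z : ℝ) : ℝ :=
  (Real.sqrt Real.pi)⁻¹ * ∫ u in Set.Iic z, Real.exp (-u ^ 2)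

/-- e(y,t) := Σ_{k} ( errfn((y + a_k t)/√(4t)) − errfn((y − a_k t)/√(4t)) ) l_k -/
noncomputable def eKer {n m : ℕ} (a : Fin m → ℝ) (l : Fin m → EuclideanSpace ℝ (Fin n))
    (y t : ℝ) : EuclideanSpace ℝ (Fin n) :=
  ∑ k, (errfn ((y + a k * t) / Real.sqrt (4 * t))
      - errfn ((y - a k * t) / Real.sqrt (4 * t))) • l k

lemma gauss_integrable : MeasureTheory.Integrable (fun u : ℝ => Real.exp (-u ^ 2)) := by
  simpa using integrable_exp_neg_mul_sq (show (0:ℝ) < 1 by norm_num)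

lemma errfn_hasDerivAt (z : ℝ) :
    HasDerivAt errfn ((Real.sqrt Real.pi)⁻¹ * Real.exp (-z ^ 2)) z := by
  have hint := gauss_integrable
  have hkey : ∀ w : ℝ, errfn w = (Real.sqrt Real.pi)⁻¹ *
      ((∫ u in Set.Iic (0:ℝ), Real.exp (-u ^ 2)) + ∫ u in (0:ℝ)..w, Real.exp (-u ^ 2)) := by
    intro w
    rw [← intervalIntegral.integral_Iic_sub_Iic hint.integrableOn hint.integrableOn]
    unfold errfn; ring
  have hcont : Continuous fun u : ℝ => Real.exp (-u ^ 2) := by continuity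
  have h1 : HasDerivAt (fun w : ℝ => ∫ u in (0:ℝ)..w, Real.exp (-u ^ 2)) (Real.exp (-z ^ 2)) z :=
    intervalIntegral.integral_hasDerivAt_right hint.intervalIntegrable
      hcont.stronglyMeasurable.stronglyMeasurableAtFilter hcont.continuousAt
  have h2 := (h1.const_add (∫ u in Set.Iic (0:ℝ), Real.exp (-u ^ 2))).const_mul
      ((Real.sqrt Real.pi)⁻¹)
  exact h2.congr_of_eventuallyEq (Filter.Eventually.of_forall hkey)

/-- the t-derivative of the "+ c t" piece -/
noncomputable def Dgp (y c t : ℝ) : ℝ :=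
  ((Real.sqrt Real.pi)⁻¹ * (Real.exp (-(y + c * t) ^ 2 / (4 * t)) *
      ((-(2 * (y + c * t) * c) * (4 * t) - -(y + c * t) ^ 2 * 4) / (4 * t) ^ 2))) *
      (Real.sqrt (4 * t))⁻¹
    + ((Real.sqrt Real.pi)⁻¹ * Real.exp (-(y + c * t) ^ 2 / (4 * t))) *
      (-(1 / (2 * Real.sqrt (4 * t)) * 4) / Real.sqrt (4 * t) ^ 2)

lemma hasDerivAt_gp (y c : ℝ) {t : ℝ} (ht : 0 < t) :
    HasDerivAt (fun t' => (Real.sqrt Real.pi)⁻¹ * Real.exp (-(y + c * t') ^ 2 / (4 * t')) *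
        (Real.sqrt (4 * t'))⁻¹) (Dgp y c t) t := by
  have hden : HasDerivAt (fun t' : ℝ => 4 * t') 4 t := by
    simpa using (hasDerivAt_id t).const_mul 4
  have hlin : HasDerivAt (fun t' : ℝ => y + c * t') c t := by
    simpa using ((hasDerivAt_id t).const_mul c).const_add y
  have hnum : HasDerivAt (fun t' : ℝ => -(y + c * t') ^ 2) (-(2 * (y + c * t) * c)) t := by
    simpa [pow_one] using (hlin.fun_pow 2).fun_neg
  have h1 : HasDerivAt (fun t' : ℝ => -(y + c * t') ^ 2 / (4 * t'))
      ((-(2 * (y + c * t) * c) * (4 * t) - -(y + c * t) ^ 2 * 4) / (4 * t) ^ 2) t :=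
    hnum.div hden (by positivity)
  have h2 := (h1.exp.const_mul ((Real.sqrt Real.pi)⁻¹))
  have h3 : HasDerivAt (fun t' : ℝ => Real.sqrt (4 * t')) (1 / (2 * Real.sqrt (4 * t)) * 4) t :=
    (Real.hasDerivAt_sqrt (by positivity)).comp t hden
  have h4 : HasDerivAt (fun t' : ℝ => (Real.sqrt (4 * t'))⁻¹)
      (-(1 / (2 * Real.sqrt (4 * t)) * 4) / Real.sqrt (4 * t) ^ 2) t :=
    h3.inv (by positivity)
  exact h2.mul h4

lemma expbound (σ k : ℝ) (hk : 0 ≤ k) :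
    (k * σ + σ ^ 2 + 1) * Real.exp (-σ ^ 2) ≤ (k + 3) * Real.exp (-σ ^ 2 / 2) := by
  have h := Real.add_one_le_exp (σ ^ 2 / 2)
  have e1 : σ ≤ Real.exp (σ ^ 2 / 2) := by nlinarith [sq_nonneg (σ - 1)]
  have e2 : σ ^ 2 ≤ 2 * Real.exp (σ ^ 2 / 2) := by nlinarith
  have e3 : (1 : ℝ) ≤ Real.exp (σ ^ 2 / 2) := Real.one_le_exp (by positivity)
  calc (k * σ + σ ^ 2 + 1) * Real.exp (-σ ^ 2)
      ≤ (k * Real.exp (σ ^ 2 / 2) + 2 * Real.exp (σ ^ 2 / 2) + Real.exp (σ ^ 2 / 2)) *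
        Real.exp (-σ ^ 2) := by
        apply mul_le_mul_of_nonneg_right _ (Real.exp_pos _).le
        have := mul_le_mul_of_nonneg_left e1 hk
        linarith
    _ = (k + 3) * (Real.exp (σ ^ 2 / 2) * Real.exp (-σ ^ 2)) := by ring
    _ = (k + 3) * Real.exp (-σ ^ 2 / 2) := by rw [← Real.exp_add]; ring_nf

lemma bound_gp (y c t : ℝ) (ht : 1 ≤ t) :
    |Dgp y c t| ≤ (Real.sqrt Real.pi)⁻¹ * (|c| + 3) * t⁻¹ *
      Real.exp (-(y + c * t) ^ 2 / (8 * t)) := by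
  have ht0 : (0:ℝ) < t := lt_of_lt_of_le one_pos ht
  unfold Dgp
  set c0 := (Real.sqrt Real.pi)⁻¹ with hc0
  have hc00 : 0 ≤ c0 := by positivity
  set p := y + c * t with hp
  set S := Real.sqrt (4 * t) with hSdef
  have hS0 : 0 < S := Real.sqrt_pos.mpr (by positivity)
  have hS2 : S ^ 2 = 4 * t := Real.sq_sqrt (by positivity)
  have hS : 2 ≤ S := by nlinarith [sq_nonneg (S - 2)]
  have hS3 : S ^ 3 = 4 * t * S := by rw [pow_succ, hS2]
  set σ := |p| / S with hσdef
  have hσ0 : 0 ≤ σ := by positivity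
  have habs : |p| = σ * S := by rw [hσdef, div_mul_cancel₀ _ hS0.ne']
  have hp2 : p ^ 2 = 4 * t * σ ^ 2 := by
    rw [← sq_abs, habs, mul_pow, hS2]; ring
  have hσ2 : σ ^ 2 = p ^ 2 / (4 * t) := by rw [hp2]; field_simp
  set W := (-(2 * p * c) * (4 * t) - -p ^ 2 * 4) / (4 * t) ^ 2 with hWdef
  set E := Real.exp (-p ^ 2 / (4 * t)) with hEdef
  have hE : E = Real.exp (-σ ^ 2) := by rw [hEdef]; congr 1; rw [hσ2]; ring
  have hE8 : Real.exp (-p ^ 2 / (8 * t)) = Real.exp (-σ ^ 2 / 2) := by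
    congr 1; rw [hσ2]; ring
  set X := -(1 / (2 * S) * 4) / S ^ 2 with hXdef
  set R := W * S⁻¹ + X with hRdef
  have hfact : c0 * (E * W) * S⁻¹ + c0 * E * X = c0 * E * R := by rw [hRdef]; ring
  rw [hfact, abs_mul, abs_mul, abs_of_nonneg hc00, abs_of_pos (Real.exp_pos _)]
  have hX2 : X = -(2 / S ^ 3) := by rw [hXdef]; field_simp; ring
  have hW : |W| ≤ (p ^ 2 + 2 * t * |p| * |c|) / (4 * t ^ 2) := by
    have hWeq : W = (p ^ 2 - 2 * t * p * c) / (4 * t ^ 2) := by rw [hWdef]; ring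
    rw [hWeq, abs_div, abs_of_pos (show (0:ℝ) < 4 * t ^ 2 by positivity)]
    apply div_le_div_of_nonneg_right ?_ (by positivity)
    calc |p ^ 2 - 2 * t * p * c| ≤ |p ^ 2| + |2 * t * p * c| := abs_sub _ _
      _ = p ^ 2 + 2 * t * |p| * |c| := by
          rw [abs_of_nonneg (sq_nonneg p), abs_mul, abs_mul, abs_mul]
          rw [abs_of_nonneg (by norm_num : (0:ℝ) ≤ 2), abs_of_pos ht0]
  have hR1 : |R| ≤ |W| * S⁻¹ + 2 / S ^ 3 := by
    calc |R| ≤ |W * S⁻¹| + |X| := abs_add_le _ _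
      _ = |W| * S⁻¹ + 2 / S ^ 3 := by
          rw [abs_mul, abs_of_nonneg (by positivity : (0:ℝ) ≤ S⁻¹), hX2, abs_neg,
            abs_of_nonneg (by positivity : (0:ℝ) ≤ 2 / S ^ 3)]
  have hR2 : |W| * S⁻¹ ≤ (σ ^ 2 + |c| * σ) / t := by
    have h1 : |W| * S⁻¹ ≤ ((p ^ 2 + 2 * t * |p| * |c|) / (4 * t ^ 2)) * S⁻¹ := by
      apply mul_le_mul_of_nonneg_right hW (by positivity)
    refine h1.trans ?_
    rw [hp2, habs, ← div_eq_mul_inv, div_div, div_le_div_iff₀ (by positivity) ht0]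
    have k1 : 0 ≤ 4 * t ^ 2 * σ ^ 2 * (S - 1) := by
      apply mul_nonneg (by positivity); linarith
    have k2 : 0 ≤ 2 * t ^ 2 * σ * S * |c| := by positivity
    nlinarith
  have hR3 : 2 / S ^ 3 ≤ 1 / t := by
    rw [hS3, div_le_div_iff₀ (by positivity) ht0]
    nlinarith
  have hRfin : |R| ≤ t⁻¹ * (|c| * σ + σ ^ 2 + 1) := by
    have heq : (σ ^ 2 + |c| * σ) / t + 1 / t = t⁻¹ * (|c| * σ + σ ^ 2 + 1) := by ring
    have h4 : |W| * S⁻¹ + 2 / S ^ 3 ≤ t⁻¹ * (|c| * σ + σ ^ 2 + 1) := by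
      rw [← heq]; exact add_le_add hR2 hR3
    exact hR1.trans h4
  calc c0 * E * |R| ≤ c0 * E * (t⁻¹ * (|c| * σ + σ ^ 2 + 1)) := by
        apply mul_le_mul_of_nonneg_left hRfin (mul_nonneg hc00 (by rw [hEdef]; positivity))
    _ = c0 * t⁻¹ * ((|c| * σ + σ ^ 2 + 1) * Real.exp (-σ ^ 2)) := by rw [hE]; ring
    _ ≤ c0 * t⁻¹ * ((|c| + 3) * Real.exp (-σ ^ 2 / 2)) := by
        apply mul_le_mul_of_nonneg_left (expbound σ |c| (abs_nonneg c)) (by positivity)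
    _ = c0 * (|c| + 3) * t⁻¹ * Real.exp (-p ^ 2 / (8 * t)) := by rw [hE8]; ring

lemma hasDerivAt_eKer_y {n m : ℕ} (a : Fin m → ℝ) (l : Fin m → EuclideanSpace ℝ (Fin n))
    (y : ℝ) {t : ℝ} (ht : 0 < t) :
    HasDerivAt (fun y' => eKer a l y' t)
      (∑ k, ((Real.sqrt Real.pi)⁻¹ * Real.exp (-(y + a k * t) ^ 2 / (4 * t)) *
          (Real.sqrt (4 * t))⁻¹
        - (Real.sqrt Real.pi)⁻¹ * Real.exp (-(y - a k * t) ^ 2 / (4 * t)) *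
          (Real.sqrt (4 * t))⁻¹) • l k) y := by
  unfold eKer
  apply HasDerivAt.fun_sum
  intro k _
  have hsq : Real.sqrt (4 * t) ^ 2 = 4 * t := Real.sq_sqrt (by positivity)
  have hzp : HasDerivAt (fun y' : ℝ => (y' + a k * t) / Real.sqrt (4 * t))
      (1 / Real.sqrt (4 * t)) y := ((hasDerivAt_id y).add_const _).div_const _
  have hzm : HasDerivAt (fun y' : ℝ => (y' - a k * t) / Real.sqrt (4 * t))
      (1 / Real.sqrt (4 * t)) y := ((hasDerivAt_id y).sub_const _).div_const _
  have hp := (errfn_hasDerivAt ((y + a k * t) / Real.sqrt (4 * t))).comp y hzp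
  have hm := (errfn_hasDerivAt ((y - a k * t) / Real.sqrt (4 * t))).comp y hzm
  rw [div_pow, hsq, one_div, ← neg_div] at hp hm
  exact (hp.sub hm).smul_const (l k)

theorem stmt3 {n m : ℕ} (hm : 1 ≤ m) (a : Fin m → ℝ) (ha : ∀ k, 0 < a k)
    (l : Fin m → EuclideanSpace ℝ (Fin n)) :
    ∃ C : ℝ, 0 < C ∧ ∃ M : ℝ, 0 < M ∧ ∀ y : ℝ, y ≤ 0 → ∀ t : ℝ, 1 ≤ t →
      ‖deriv (fun t' => deriv (fun y' => eKer a l y' t') y) t‖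
        ≤ C * t ^ (-1 : ℝ) *
          ∑ k, (Real.exp (-(y + a k * t) ^ 2 / (M * t))
            + Real.exp (-(y - a k * t) ^ 2 / (M * t))) := by
  set Cc := 1 + ∑ k, (Real.sqrt Real.pi)⁻¹ * (|a k| + 3) * ‖l k‖ with hCc
  have hCc0 : 0 < Cc := by
    rw [hCc]
    have : (0:ℝ) ≤ ∑ k, (Real.sqrt Real.pi)⁻¹ * (|a k| + 3) * ‖l k‖ :=
      Finset.sum_nonneg fun k _ => by positivity
    linarith
  refine ⟨Cc, hCc0, 8, by norm_num, ?_⟩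
  intro y hy t ht
  have ht0 : (0:ℝ) < t := lt_of_lt_of_le one_pos ht
  have hev : (fun t' => deriv (fun y' => eKer a l y' t') y) =ᶠ[nhds t]
      (fun t' => ∑ k, ((Real.sqrt Real.pi)⁻¹ * Real.exp (-(y + a k * t') ^ 2 / (4 * t')) *
          (Real.sqrt (4 * t'))⁻¹
        - (Real.sqrt Real.pi)⁻¹ * Real.exp (-(y - a k * t') ^ 2 / (4 * t')) *
          (Real.sqrt (4 * t'))⁻¹) • l k) := by
    filter_upwards [eventually_gt_nhds ht0] with t' ht'
    exact (hasDerivAt_eKer_y a l y ht').deriv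
  rw [hev.deriv_eq]
  have hBd : ∀ k : Fin m, HasDerivAt
      (fun t' => (Real.sqrt Real.pi)⁻¹ * Real.exp (-(y - a k * t') ^ 2 / (4 * t')) *
        (Real.sqrt (4 * t'))⁻¹) (Dgp y (-(a k)) t) t := by
    intro k
    have h := hasDerivAt_gp y (-(a k)) ht0
    simp only [neg_mul, ← sub_eq_add_neg] at h
    exact h
  have hD : HasDerivAt
      (fun t' => ∑ k, ((Real.sqrt Real.pi)⁻¹ * Real.exp (-(y + a k * t') ^ 2 / (4 * t')) *
          (Real.sqrt (4 * t'))⁻¹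
        - (Real.sqrt Real.pi)⁻¹ * Real.exp (-(y - a k * t') ^ 2 / (4 * t')) *
          (Real.sqrt (4 * t'))⁻¹) • l k)
      (∑ k, (Dgp y (a k) t - Dgp y (-(a k)) t) • l k) t :=
    HasDerivAt.fun_sum fun k _ => ((hasDerivAt_gp y (a k) ht0).sub (hBd k)).smul_const (l k)
  rw [hD.deriv]
  have hrpow : t ^ (-1 : ℝ) = t⁻¹ := by
    rw [Real.rpow_neg ht0.le, Real.rpow_one]
  rw [hrpow]
  calc ‖∑ k, (Dgp y (a k) t - Dgp y (-(a k)) t) • l k‖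
      ≤ ∑ k, ‖(Dgp y (a k) t - Dgp y (-(a k)) t) • l k‖ := norm_sum_le _ _
    _ = ∑ k, |Dgp y (a k) t - Dgp y (-(a k)) t| * ‖l k‖ := by
        simp [norm_smul, Real.norm_eq_abs]
    _ ≤ ∑ k, Cc * t⁻¹ * (Real.exp (-(y + a k * t) ^ 2 / (8 * t))
          + Real.exp (-(y - a k * t) ^ 2 / (8 * t))) := by
        apply Finset.sum_le_sum
        intro k _
        have b1 := bound_gp y (a k) t ht
        have b2 := bound_gp y (-(a k)) t ht
        simp only [abs_neg, neg_mul, ← sub_eq_add_neg] at b2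
        have hK : (Real.sqrt Real.pi)⁻¹ * (|a k| + 3) * ‖l k‖ ≤ Cc := by
          rw [hCc]
          have := Finset.single_le_sum
            (f := fun j => (Real.sqrt Real.pi)⁻¹ * (|a j| + 3) * ‖l j‖)
            (fun j _ => by positivity) (Finset.mem_univ k)
          linarith
        have htri := abs_sub (Dgp y (a k) t) (Dgp y (-(a k)) t)
        calc |Dgp y (a k) t - Dgp y (-(a k)) t| * ‖l k‖
            ≤ ((Real.sqrt Real.pi)⁻¹ * (|a k| + 3) * t⁻¹ *
                (Real.exp (-(y + a k * t) ^ 2 / (8 * t))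
                  + Real.exp (-(y - a k * t) ^ 2 / (8 * t)))) * ‖l k‖ := by
              apply mul_le_mul_of_nonneg_right _ (norm_nonneg _)
              have : (Real.sqrt Real.pi)⁻¹ * (|a k| + 3) * t⁻¹ *
                  (Real.exp (-(y + a k * t) ^ 2 / (8 * t))
                    + Real.exp (-(y - a k * t) ^ 2 / (8 * t)))
                  = (Real.sqrt Real.pi)⁻¹ * (|a k| + 3) * t⁻¹ *
                      Real.exp (-(y + a k * t) ^ 2 / (8 * t))
                    + (Real.sqrt Real.pi)⁻¹ * (|a k| + 3) * t⁻¹ *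
                      Real.exp (-(y - a k * t) ^ 2 / (8 * t)) := by ring
              rw [this]
              linarith
          _ = ((Real.sqrt Real.pi)⁻¹ * (|a k| + 3) * ‖l k‖) *
                (t⁻¹ * (Real.exp (-(y + a k * t) ^ 2 / (8 * t))
                  + Real.exp (-(y - a k * t) ^ 2 / (8 * t)))) := by ring
          _ ≤ Cc * (t⁻¹ * (Real.exp (-(y + a k * t) ^ 2 / (8 * t))
                  + Real.exp (-(y - a k * t) ^ 2 / (8 * t)))) := by
              apply mul_le_mul_of_nonneg_right hK (by positivity)
          _ = Cc * t⁻¹ * (Real.exp (-(y + a k * t) ^ 2 / (8 * t))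
                  + Real.exp (-(y - a k * t) ^ 2 / (8 * t))) := by ring
    _ = Cc * t⁻¹ * ∑ k, (Real.exp (-(y + a k * t) ^ 2 / (8 * t))
          + Real.exp (-(y - a k * t) ^ 2 / (8 * t))) := by
        rw [← Finset.mul_sum]
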